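/- Let B ⊆ ℕ^ℕ be an unbounded family. Then the Fréchet (cofinite) filter F on ℕ is combinatorially B-Canjar: for every sequence X̄ = ⟨X_n : n ∈ ℕ⟩ of F-positive sets of finite subsets of ℕ there exists f ∈ B such that X̄_f is F-positive. -/

import Mathlib

/-- `B ⊆ ℕ^ℕ` is an unbounded family: no single `g` eventually dominates all
members of `B`. -/
def UnboundedFam (B : Set (ℕ → ℕ)) : Prop :=
  ¬ ∃ g : ℕ → ℕ, ∀ f ∈ B, {n : ℕ | ¬ f n ≤ g n}.Finite

/-- `X` is `F`-positive: every set in the filter `F` contains a member of `X`. -/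
def FPositive (F : Filter ℕ) (X : Set (Finset ℕ)) : Prop :=
  ∀ A ∈ F, ∃ s ∈ X, (s : Set ℕ) ⊆ A

/-- `X̄_f := ⋃ₙ {s ∈ X̄(n) : s ⊆ {0, …, f(n) − 1}}`. -/
def cutBelow (Xbar : ℕ → Set (Finset ℕ)) (f : ℕ → ℕ) : Set (Finset ℕ) :=
  ⋃ n : ℕ, {s : Finset ℕ | s ∈ Xbar n ∧ ∀ m ∈ s, m < f n}

/-- `F` is combinatorially `B`-Canjar: for every sequence `X̄` of `F`-positive
sets of finite subsets of ℕ there is `f ∈ B` such that `X̄_f` is `F`-positive. -/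
def CombBCanjar (B : Set (ℕ → ℕ)) (F : Filter ℕ) : Prop :=
  ∀ Xbar : ℕ → Set (Finset ℕ), (∀ n, FPositive F (Xbar n)) →
    ∃ f ∈ B, FPositive F (cutBelow Xbar f)

/-- For every unbounded family `B`, the Fréchet (cofinite) filter is
combinatorially `B`-Canjar. -/
theorem frechet_combBCanjar (B : Set (ℕ → ℕ)) (hB : UnboundedFam B) :
    CombBCanjar B (Filter.cofinite : Filter ℕ) := by
  intro Xbar hX
  -- choose, for each n, a set s n ∈ Xbar n with all elements ≥ n
  have hsel : ∀ n : ℕ, ∃ s ∈ Xbar n, (s : Set ℕ) ⊆ Set.Ici n := by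
    intro n
    apply hX n (Set.Ici n)
    rw [Filter.mem_cofinite]
    exact (Set.finite_Iio n).subset (by
      intro m hm
      simp only [Set.mem_compl_iff, Set.mem_Ici, not_le] at hm
      exact hm)
  choose s hs hs' using hsel
  set g : ℕ → ℕ := fun n => (s n).sup id + 1 with hg
  -- get f ∈ B not dominated by g
  rw [UnboundedFam] at hB
  push_neg at hB
  obtain ⟨f, hfB, hinf⟩ := hB g
  replace hinf : {n | g n < f n}.Infinite := hinf
  refine ⟨f, hfB, ?_⟩
  intro A hA
  rw [Filter.mem_cofinite] at hA
  -- find N such that [N,∞) ⊆ A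
  obtain ⟨N, hN⟩ : ∃ N : ℕ, ∀ m, N ≤ m → m ∈ A := by
    rcases Set.eq_empty_or_nonempty Aᶜ with h | h
    · exact ⟨0, fun m _ => by
        by_contra hm
        exact Set.eq_empty_iff_forall_notMem.mp h m hm⟩
    · obtain ⟨N, hNmem, hNmax⟩ := Set.Finite.exists_maximalFor id Aᶜ hA h
      refine ⟨N + 1, fun m hm => ?_⟩
      by_contra hmA
      have := hNmax (j := m) hmA (by simpa using by omega)
      simp only [id] at this
      omega
  obtain ⟨n, hnmem, hnN⟩ := hinf.exists_gt N
  simp only [Set.mem_setOf_eq] at hnmem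
  refine ⟨s n, ?_, ?_⟩
  · exact Set.mem_iUnion.mpr ⟨n, hs n, fun m hm => by
      have h1 : m ≤ (s n).sup id := Finset.le_sup (f := id) hm
      have h2 : g n = (s n).sup id + 1 := rfl
      omega⟩
  · intro m hm
    exact hN m (le_trans hnN.le (hs' n hm))
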